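/- Let Z := {(t, π(t,w)) : t ∈ [0,1], w ∈ 𝔼₁} ⊆ [0,1] × 𝔼₂, where π : [0,1] × 𝔼₁ → 𝔼₂ is continuous and linear in the second variable, and let N : [0,1] × 𝔼₁ → [0,∞) be a continuous family of norms on the finite-dimensional space 𝔼₁. Define S : Z → [0,∞) by S(t,v) := min{ N(t,w) : π(t,w) = v }. Then S is lower semicontinuous on Z. -/
import Mathlib


open Set Filter Topology

/-- Uniform lower bound `c‖w‖ ≤ N t w`. -/
lemma aux_bound {E1 : Type*}
    [NormedAddCommGroup E1] [NormedSpace ℝ E1] [FiniteDimensional ℝ E1]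
    (N : ℝ → E1 → ℝ)
    (hNc : ContinuousOn (Function.uncurry N) (Set.Icc 0 1 ×ˢ Set.univ))
    (hNeq : ∀ t ∈ Set.Icc (0:ℝ) 1, ∀ v : E1, N t v = 0 ↔ v = 0)
    (hN0 : ∀ t ∈ Set.Icc (0:ℝ) 1, ∀ v : E1, 0 ≤ N t v)
    (hNsmul : ∀ t ∈ Set.Icc (0:ℝ) 1, ∀ (c : ℝ) (v : E1), N t (c • v) = |c| * N t v) :
    ∃ c > 0, ∀ t ∈ Set.Icc (0:ℝ) 1, ∀ w : E1, c * ‖w‖ ≤ N t w := by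
  rcases subsingleton_or_nontrivial E1 with h | h
  · refine ⟨1, one_pos, fun t ht w => ?_⟩
    have : w = 0 := Subsingleton.elim w 0
    subst this
    simp [(hNeq t ht 0).2 rfl]
  · set K : Set (ℝ × E1) := Set.Icc 0 1 ×ˢ Metric.sphere (0:E1) 1 with hK
    have hKc : IsCompact K := isCompact_Icc.prod (isCompact_sphere 0 1)
    have hKne : K.Nonempty := by
      obtain ⟨u, hu⟩ := (NormedSpace.sphere_nonempty (E := E1) (x := 0) (r := 1)).2 zero_le_one
      exact ⟨(0, u), by simp [hK], hu⟩
    have hsub : K ⊆ Set.Icc 0 1 ×ˢ Set.univ := fun q hq => ⟨hq.1, trivial⟩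
    obtain ⟨z, hzK, hzmin⟩ := hKc.exists_isMinOn hKne (hNc.mono hsub)
    set c := N z.1 z.2 with hc
    have hz2 : z.2 ∈ Metric.sphere (0:E1) 1 := hzK.2
    have hcpos : 0 < c := by
      rcases lt_or_eq_of_le (hN0 z.1 hzK.1 z.2) with h' | h'
      · exact h'
      · exfalso
        have : z.2 = 0 := (hNeq z.1 hzK.1 z.2).1 h'.symm
        rw [this] at hz2
        simp at hz2
    refine ⟨c, hcpos, fun t ht w => ?_⟩
    rcases eq_or_ne w 0 with rfl | hw
    · simp [(hNeq t ht 0).2 rfl]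
    · have hnw : (0:ℝ) < ‖w‖ := norm_pos_iff.2 hw
      set u := ‖w‖⁻¹ • w with hu
      have hu1 : u ∈ Metric.sphere (0:E1) 1 := by
        simp [hu, norm_smul, abs_of_pos (inv_pos.2 hnw), inv_mul_cancel₀ hnw.ne']
      have hmin : c ≤ N t u := hzmin (show (t,u) ∈ K from ⟨ht, hu1⟩)
      have hwu : w = ‖w‖ • u := by
        rw [hu, smul_smul, mul_inv_cancel₀ hnw.ne', one_smul]
      calc c * ‖w‖ ≤ N t u * ‖w‖ := by nlinarith
        _ = N t w := by
            conv_rhs => rw [hwu]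
            rw [hNsmul t ht ‖w‖ u, abs_of_pos hnw, mul_comm]

/-- On `Z = {(t, π(t,w)) : t ∈ [0,1], w ∈ 𝔼₁}`, the minimal-norm function
`S(t,v) = min { N(t,w) : π(t,w) = v }` is lower semicontinuous. -/
theorem stmt_8 {E1 E2 : Type*}
    [NormedAddCommGroup E1] [NormedSpace ℝ E1] [FiniteDimensional ℝ E1]
    [NormedAddCommGroup E2] [NormedSpace ℝ E2] [FiniteDimensional ℝ E2]
    (N : ℝ → E1 → ℝ)
    (hNc : ContinuousOn (Function.uncurry N) (Set.Icc 0 1 ×ˢ Set.univ))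
    (hN0 : ∀ t ∈ Set.Icc (0:ℝ) 1, ∀ v : E1, 0 ≤ N t v)
    (hNeq : ∀ t ∈ Set.Icc (0:ℝ) 1, ∀ v : E1, N t v = 0 ↔ v = 0)
    (hNsmul : ∀ t ∈ Set.Icc (0:ℝ) 1, ∀ (c : ℝ) (v : E1), N t (c • v) = |c| * N t v)
    (hNadd : ∀ t ∈ Set.Icc (0:ℝ) 1, ∀ v w : E1, N t (v + w) ≤ N t v + N t w)
    (π : ℝ → E1 →ₗ[ℝ] E2)
    (hπc : ContinuousOn (fun p : ℝ × E1 => π p.1 p.2) (Set.Icc 0 1 ×ˢ Set.univ)) :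
    LowerSemicontinuousOn
      (fun p : ℝ × E2 => sInf { r : ℝ | ∃ z : E1, π p.1 z = p.2 ∧ r = N p.1 z })
      { p : ℝ × E2 | p.1 ∈ Set.Icc (0:ℝ) 1 ∧ ∃ z : E1, π p.1 z = p.2 } := by
  set Z : Set (ℝ × E2) := { p : ℝ × E2 | p.1 ∈ Set.Icc (0:ℝ) 1 ∧ ∃ z : E1, π p.1 z = p.2 }
    with hZ
  set S : ℝ × E2 → ℝ := fun p => sInf { r : ℝ | ∃ z : E1, π p.1 z = p.2 ∧ r = N p.1 z } with hS
  obtain ⟨c, hcpos, hcle⟩ := aux_bound N hNc hNeq hN0 hNsmul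
  intro p hp r hr
  by_contra hcon
  rw [Filter.not_eventually] at hcon
  have hcon' : ∃ᶠ q in 𝓝[Z] p, S q ≤ r := hcon.mono fun q hq => not_lt.1 hq
  obtain ⟨x, hx, hxS⟩ := Filter.exists_seq_forall_of_frequently hcon'
  rw [tendsto_nhdsWithin_iff] at hx
  obtain ⟨hx1, hx2⟩ := hx
  obtain ⟨K0, hK0⟩ := eventually_atTop.1 hx2
  set y : ℕ → ℝ × E2 := fun n => x (n + K0) with hy
  have hyZ : ∀ n, y n ∈ Z := fun n => hK0 (n + K0) (Nat.le_add_left _ _)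
  have hyt : Tendsto y atTop (𝓝 p) := hx1.comp (tendsto_add_atTop_nat K0)
  have hyS : ∀ n, S (y n) ≤ r := fun n => hxS (n + K0)
  -- choose near-minimizers
  have hchoice : ∀ n : ℕ, ∃ z : E1, π (y n).1 z = (y n).2 ∧ N (y n).1 z < r + 1 / (n + 1) := by
    intro n
    have hne : { r' : ℝ | ∃ z : E1, π (y n).1 z = (y n).2 ∧ r' = N (y n).1 z }.Nonempty := by
      obtain ⟨z, hz⟩ := (hyZ n).2
      exact ⟨N (y n).1 z, z, hz, rfl⟩
    have hε : (0:ℝ) < 1 / (n + 1) := by positivity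
    obtain ⟨a, ⟨z, hz1, hz2⟩, ha⟩ := Real.lt_sInf_add_pos hne hε
    exact ⟨z, hz1, by rw [← hz2]; exact ha.trans_le (by have := hyS n; simp only [hS] at this; linarith)⟩
  choose w hw1 hw2 using hchoice
  -- bound on w
  have hyIcc : ∀ n, (y n).1 ∈ Set.Icc (0:ℝ) 1 := fun n => (hyZ n).1
  set R := (|r| + 1) / c with hR
  have hwball : ∀ n, w n ∈ Metric.closedBall (0:E1) R := by
    intro n
    rw [Metric.mem_closedBall, dist_zero_right]
    have h1 : c * ‖w n‖ ≤ N (y n).1 (w n) := hcle _ (hyIcc n) _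
    have h2 : N (y n).1 (w n) < r + 1 / (n + 1) := hw2 n
    have h3 : (1:ℝ) / (n + 1) ≤ 1 := by
      rw [div_le_one (by positivity)]; linarith [Nat.cast_nonneg (α := ℝ) n]
    have h4 : c * ‖w n‖ ≤ |r| + 1 := by
      have := le_abs_self r; linarith
    rw [hR, le_div_iff₀ hcpos]; linarith
  obtain ⟨winf, _, φ, hφ, hwtend⟩ :=
    (isCompact_closedBall (0:E1) R).tendsto_subseq hwball
  -- combined sequence tends to (p.1, winf) within Icc ×ˢ univ
  have hpt : Tendsto (fun n => (y n).1) atTop (𝓝 p.1) := (continuous_fst.tendsto p).comp hyt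
  have hpv : Tendsto (fun n => (y n).2) atTop (𝓝 p.2) := (continuous_snd.tendsto p).comp hyt
  have hφtop : Tendsto φ atTop atTop := hφ.tendsto_atTop
  set u : ℕ → ℝ × E1 := fun j => ((y (φ j)).1, w (φ j)) with hu
  have hutend : Tendsto u atTop (𝓝[Set.Icc 0 1 ×ˢ Set.univ] (p.1, winf)) := by
    rw [tendsto_nhdsWithin_iff]
    constructor
    · exact ((hpt.comp hφtop).prodMk_nhds hwtend)
    · exact Eventually.of_forall fun j => ⟨hyIcc (φ j), trivial⟩
  have hp1 : p.1 ∈ Set.Icc (0:ℝ) 1 := hp.1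
  have hmem : ((p.1 : ℝ), winf) ∈ Set.Icc (0:ℝ) 1 ×ˢ (Set.univ : Set E1) := ⟨hp1, trivial⟩
  -- π limit
  have hπlim : Tendsto (fun j => π (u j).1 (u j).2) atTop (𝓝 (π p.1 winf)) :=
    (hπc (p.1, winf) hmem).tendsto.comp hutend
  have hπeq : π p.1 winf = p.2 := by
    have : (fun j => π (u j).1 (u j).2) = fun j => (y (φ j)).2 := by
      funext j; exact hw1 (φ j)
    rw [this] at hπlim
    exact tendsto_nhds_unique hπlim (hpv.comp hφtop)
  -- N limit
  have hNlim : Tendsto (fun j => N (u j).1 (u j).2) atTop (𝓝 (N p.1 winf)) :=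
    (hNc (p.1, winf) hmem).tendsto.comp hutend
  have hrlim : Tendsto (fun j : ℕ => r + 1 / ((φ j : ℝ) + 1)) atTop (𝓝 (r + 0)) :=
    tendsto_const_nhds.add (tendsto_one_div_add_atTop_nhds_zero_nat.comp hφtop)
  rw [add_zero] at hrlim
  have hNle : N p.1 winf ≤ r :=
    le_of_tendsto_of_tendsto' hNlim hrlim fun j => (hw2 (φ j)).le
  -- conclude
  have hSle : S p ≤ N p.1 winf := by
    apply csInf_le
    · exact ⟨0, fun a ⟨z, _, hz⟩ => hz ▸ hN0 p.1 hp1 z⟩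
    · exact ⟨winf, hπeq, rfl⟩
  exact absurd (hr.trans_le (hSle.trans hNle)) (lt_irrefl r)
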